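/- Let Q be a uniformly random K-element subset of Fin J with 1 < K ≤ J and J ≥ 2, and let c : Fin J → ℝ be fixed. Define T = (1/K) Σ_{j∈Q} c j and the estimator V̂ = (1 − K/J) · Σ_{j∈Q} (c j − T)² / ((K−1)·K). Then E[V̂] = Var(T). -/

import Mathlib

open Finset

lemma count_mem_subset {α : Type*} [DecidableEq α] (s : Finset α) (K : ℕ) (j : α) (hj : j ∈ s) (hK1 : 1 ≤ K) :
    ((s.powersetCard K).filter (fun S => j ∈ S)).card
      = ((s.erase j).powersetCard (K-1)).card := by
  apply Finset.card_bij (fun S _ => S.erase j)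
  · intro S hS
    simp only [mem_filter, mem_powersetCard] at hS
    simp only [mem_powersetCard]
    refine ⟨fun x hx => ?_, ?_⟩
    · rw [mem_erase] at hx ⊢; exact ⟨hx.1, hS.1.1 hx.2⟩
    · rw [card_erase_of_mem hS.2, hS.1.2]
  · intro S hS T hT h
    simp only [mem_filter] at hS hT
    rw [← insert_erase hS.2, ← insert_erase hT.2, h]
  · intro T hT
    simp only [mem_powersetCard] at hT
    refine ⟨insert j T, ?_, ?_⟩
    · simp only [mem_filter, mem_powersetCard, mem_insert]
      have hjT : j ∉ T := fun h => (mem_erase.mp (hT.1 h)).1 rfl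
      refine ⟨⟨insert_subset hj (hT.1.trans (erase_subset _ _)), ?_⟩, Or.inl trivial⟩
      rw [card_insert_of_notMem hjT, hT.2]
      omega
    · exact erase_insert (fun h => (mem_erase.mp (hT.1 h)).1 rfl)

lemma count_mem_pair {α : Type*} [DecidableEq α] (s : Finset α) (K : ℕ) (i j : α)
    (hi : i ∈ s) (hj : j ∈ s) (hij : i ≠ j) (hK : 2 ≤ K) :
    ((s.powersetCard K).filter (fun S => i ∈ S ∧ j ∈ S)).card
      = (((s.erase i).erase j).powersetCard (K-2)).card := by
  apply Finset.card_bij (fun S _ => (S.erase i).erase j)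
  · intro S hS
    simp only [mem_filter, mem_powersetCard] at hS
    simp only [mem_powersetCard]
    refine ⟨fun x hx => ?_, ?_⟩
    · simp only [mem_erase] at hx ⊢
      exact ⟨hx.1, hx.2.1, hS.1.1 hx.2.2⟩
    · rw [card_erase_of_mem (by simp [mem_erase, hij.symm, hS.2.2]),
        card_erase_of_mem hS.2.1, hS.1.2]
      omega
  · intro S hS T hT h
    simp only [mem_filter] at hS hT
    have : insert i (insert j ((S.erase i).erase j)) = S := by
      rw [insert_erase (by simp [mem_erase, hij.symm, hS.2.2]), insert_erase hS.2.1]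
    rw [← this, h, insert_erase (by simp [mem_erase, hij.symm, hT.2.2]), insert_erase hT.2.1]
  · intro T hT
    simp only [mem_powersetCard] at hT
    have hiT : i ∉ T := fun h => by
      have := hT.1 h; simp [mem_erase] at this
    have hjT : j ∉ T := fun h => by
      have := hT.1 h; simp [mem_erase] at this
    refine ⟨insert i (insert j T), ?_, ?_⟩
    · simp only [mem_filter, mem_powersetCard, mem_insert]
      have hsub : insert i (insert j T) ⊆ s := by
        apply insert_subset hi
        apply insert_subset hj
        exact hT.1.trans ((erase_subset _ _).trans (erase_subset _ _))
      refine ⟨⟨hsub, ?_⟩, Or.inl trivial, Or.inr (Or.inl trivial)⟩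
      rw [card_insert_of_notMem (by simp [hij, hiT]), card_insert_of_notMem hjT, hT.2]
      omega
    · rw [erase_insert (by simp [hij, hiT]), erase_insert hjT]

lemma count_single (J K : ℕ) (hK1 : 1 ≤ K) (j : Fin J) :
    (((univ : Finset (Fin J)).powersetCard K).filter (fun S => j ∈ S)).card
      = (J-1).choose (K-1) := by
  rw [count_mem_subset _ _ _ (mem_univ j) hK1, Finset.card_powersetCard,
    card_erase_of_mem (mem_univ j), card_univ, Fintype.card_fin]

lemma count_pair (J K : ℕ) (hK : 2 ≤ K) (i j : Fin J) (hij : i ≠ j) :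
    (((univ : Finset (Fin J)).powersetCard K).filter (fun S => i ∈ S ∧ j ∈ S)).card
      = (J-2).choose (K-2) := by
  rw [count_mem_pair _ _ _ _ (mem_univ i) (mem_univ j) hij hK, Finset.card_powersetCard,
    card_erase_of_mem (by simp [mem_erase, hij.symm]), card_erase_of_mem (mem_univ i),
    card_univ, Fintype.card_fin]
  rw [Nat.sub_sub]

lemma sum_single (J K : ℕ) (hK1 : 1 ≤ K) (f : Fin J → ℝ) :
    ∑ S ∈ (univ : Finset (Fin J)).powersetCard K, ∑ j ∈ S, f j
      = ((J-1).choose (K-1) : ℝ) * ∑ j, f j := by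
  have h : ∀ S ∈ (univ : Finset (Fin J)).powersetCard K,
      ∑ j ∈ S, f j = ∑ j : Fin J, if j ∈ S then f j else 0 := by
    intro S _
    rw [Finset.sum_ite_mem, univ_inter]
  rw [Finset.sum_congr rfl h, Finset.sum_comm, Finset.mul_sum]
  refine Finset.sum_congr rfl fun j _ => ?_
  rw [← Finset.sum_filter, Finset.sum_const, nsmul_eq_mul, count_single J K hK1 j]

lemma sum_sq (J K : ℕ) (hK : 2 ≤ K) (c : Fin J → ℝ) :
    ∑ S ∈ (univ : Finset (Fin J)).powersetCard K, (∑ j ∈ S, c j)^2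
      = ((J-2).choose (K-2) : ℝ) * (∑ j, c j)^2
        + (((J-1).choose (K-1) : ℝ) - ((J-2).choose (K-2) : ℝ)) * ∑ j, (c j)^2 := by
  have h1 : ∀ S ∈ (univ : Finset (Fin J)).powersetCard K,
      (∑ j ∈ S, c j)^2 = ∑ i : Fin J, ∑ j : Fin J,
        (if i ∈ S ∧ j ∈ S then c i * c j else 0) := by
    intro S _
    have e : ∑ j ∈ S, c j = ∑ j : Fin J, if j ∈ S then c j else 0 := by
      rw [Finset.sum_ite_mem, univ_inter]
    rw [e, sq, Finset.sum_mul_sum]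
    refine Finset.sum_congr rfl fun i _ => Finset.sum_congr rfl fun j _ => ?_
    split_ifs with h1 h2 h3 h4 h5 <;> simp_all
  rw [Finset.sum_congr rfl h1, Finset.sum_comm]
  have h2 : ∀ i : Fin J, ∑ S ∈ (univ : Finset (Fin J)).powersetCard K,
      ∑ j : Fin J, (if i ∈ S ∧ j ∈ S then c i * c j else 0)
      = ∑ j : Fin J, ∑ S ∈ (univ : Finset (Fin J)).powersetCard K,
        (if i ∈ S ∧ j ∈ S then c i * c j else 0) := fun i => Finset.sum_comm
  rw [Finset.sum_congr rfl fun i _ => h2 i]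
  have h3 : ∀ i j : Fin J, ∑ S ∈ (univ : Finset (Fin J)).powersetCard K,
      (if i ∈ S ∧ j ∈ S then c i * c j else 0)
      = (if i = j then ((J-1).choose (K-1) : ℝ) else ((J-2).choose (K-2) : ℝ)) * (c i * c j) := by
    intro i j
    rw [← Finset.sum_filter, Finset.sum_const, nsmul_eq_mul]
    by_cases hij : i = j
    · subst hij
      simp only [and_self]
      rw [count_single J K (by omega) i]
      simp
    · rw [if_neg hij, count_pair J K hK i j hij]
  rw [Finset.sum_congr rfl fun i _ => Finset.sum_congr rfl fun j _ => h3 i j]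
  have h4 : ∀ i : Fin J, ∑ j : Fin J,
      (if i = j then ((J-1).choose (K-1) : ℝ) else ((J-2).choose (K-2) : ℝ)) * (c i * c j)
      = ((J-2).choose (K-2) : ℝ) * (c i * ∑ j, c j)
        + (((J-1).choose (K-1) : ℝ) - ((J-2).choose (K-2) : ℝ)) * (c i)^2 := by
    intro i
    have : ∀ j : Fin J,
        (if i = j then ((J-1).choose (K-1) : ℝ) else ((J-2).choose (K-2) : ℝ)) * (c i * c j)
        = ((J-2).choose (K-2) : ℝ) * (c i * c j)
          + (if j = i then (((J-1).choose (K-1) : ℝ) - ((J-2).choose (K-2) : ℝ)) * (c i)^2 else 0) := by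
      intro j
      by_cases hij : i = j
      · subst hij; simp; ring
      · rw [if_neg hij, if_neg (fun h : j = i => hij h.symm)]
        ring
    rw [Finset.sum_congr rfl fun j _ => this j, Finset.sum_add_distrib,
      Finset.sum_ite_eq' univ i, if_pos (mem_univ i), ← Finset.mul_sum, ← Finset.mul_sum]
  rw [Finset.sum_congr rfl fun i _ => h4 i, Finset.sum_add_distrib]
  simp only [← Finset.mul_sum]
  rw [← Finset.sum_mul]
  ring

lemma key_algebra (Jr Kr n c1 c2 A B : ℝ) (hK : Kr ≠ 0) (hK1 : Kr - 1 ≠ 0) (hJ : Jr ≠ 0)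
    (hJ1 : Jr - 1 ≠ 0) (hn : n ≠ 0)
    (h1 : Kr * n = Jr * c1) (h2 : (Kr - 1) * c1 = (Jr - 1) * c2) :
    ((1 - Kr/Jr)/((Kr-1)*Kr) * (c1*B) - (1 - Kr/Jr)/((Kr-1)*Kr*Kr) * (c2*A^2 + (c1-c2)*B)) / n
      = ((1/Kr)^2 * (c2*A^2 + (c1-c2)*B) - (2*((1/Kr)*(c1*A)/n)*(1/Kr))*(c1*A)
          + n*((1/Kr)*(c1*A)/n)^2) / n := by
  have hc1 : c1 = Kr*n/Jr := by field_simp; linarith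
  have hc2 : c2 = (Kr-1)*c1/(Jr-1) := by field_simp; linarith
  subst hc1
  rw [hc2]
  field_simp
  ring


/-- Expectation of a real-valued function of a uniformly random `K`-element subset of `Fin J`. -/
noncomputable def pexp (J K : ℕ) (f : Finset (Fin J) → ℝ) : ℝ :=
  (∑ S ∈ (univ : Finset (Fin J)).powersetCard K, f S) /
    (((univ : Finset (Fin J)).powersetCard K).card : ℝ)

/-- For `T = (1/K) Σ_{j∈Q} c j` with `Q` a uniformly random `K`-subset of
`Fin J` (`1 < K ≤ J`, `J ≥ 2`), the between-cluster variance estimator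
`V̂ = (1 − K/J) · Σ_{j∈Q} (c j − T)² / ((K−1)·K)` is unbiased for `Var(T)`. -/
theorem between_cluster_variance_estimator (J K : ℕ) (hK1 : 1 < K) (hK : K ≤ J)
    (hJ : 2 ≤ J) (c : Fin J → ℝ) :
    pexp J K (fun Q =>
        (1 - (K : ℝ) / (J : ℝ)) *
          (∑ j ∈ Q, (c j - (1 / (K : ℝ)) * ∑ j' ∈ Q, c j') ^ 2) /
          (((K : ℝ) - 1) * (K : ℝ))) =
      pexp J K (fun Q =>
        ((1 / (K : ℝ)) * ∑ j ∈ Q, c j -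
          pexp J K (fun Q' => (1 / (K : ℝ)) * ∑ j ∈ Q', c j)) ^ 2) := by
  have hK0 : (K:ℝ) ≠ 0 := Nat.cast_ne_zero.mpr (by omega)
  have hJ0 : (J:ℝ) ≠ 0 := Nat.cast_ne_zero.mpr (by omega)
  have hK1r : (K:ℝ) - 1 ≠ 0 := by
    have : (2:ℝ) ≤ (K:ℝ) := by exact_mod_cast hK1
    linarith
  have hJ1r : (J:ℝ) - 1 ≠ 0 := by
    have : (2:ℝ) ≤ (J:ℝ) := by exact_mod_cast hJ
    linarith
  have hNnat : ((univ : Finset (Fin J)).powersetCard K).card = J.choose K := by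
    rw [Finset.card_powersetCard, card_univ, Fintype.card_fin]
  have hn : ((((univ : Finset (Fin J)).powersetCard K).card : ℕ) : ℝ) ≠ 0 := by
    rw [hNnat]
    exact Nat.cast_ne_zero.mpr (Nat.choose_pos hK).ne'
  have nat1 : J * (J-1).choose (K-1) = J.choose K * K := by
    have h := Nat.add_one_mul_choose_eq (J-1) (K-1)
    rwa [show J-1+1 = J by omega, show K-1+1 = K by omega] at h
  have nat2 : (J-1) * (J-2).choose (K-2) = (J-1).choose (K-1) * (K-1) := by
    have h := Nat.add_one_mul_choose_eq (J-2) (K-2)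
    rwa [show J-2+1 = J-1 by omega, show K-2+1 = K-1 by omega] at h
  have hR1 : (K:ℝ) * ((((univ : Finset (Fin J)).powersetCard K).card : ℕ) : ℝ)
      = (J:ℝ) * (((J-1).choose (K-1) : ℕ) : ℝ) := by
    rw [hNnat]
    have := congrArg (fun m : ℕ => (m:ℝ)) nat1
    push_cast at this
    linarith
  have hR2 : ((K:ℝ) - 1) * (((J-1).choose (K-1) : ℕ) : ℝ)
      = ((J:ℝ) - 1) * (((J-2).choose (K-2) : ℕ) : ℝ) := by
    have := congrArg (fun m : ℕ => (m:ℝ)) nat2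
    push_cast [Nat.cast_sub (show 1 ≤ J by omega), Nat.cast_sub (show 1 ≤ K by omega)] at this
    linarith
  have hμ : pexp J K (fun Q' => (1 / (K : ℝ)) * ∑ j ∈ Q', c j)
      = (1/(K:ℝ)) * ((((J-1).choose (K-1) : ℕ) : ℝ) * ∑ j, c j)
          / ((((univ : Finset (Fin J)).powersetCard K).card : ℕ) : ℝ) := by
    simp only [pexp]
    rw [← Finset.mul_sum, sum_single J K (by omega) c]
  simp only [hμ]
  simp only [pexp]
  have hLnum : ∑ S ∈ (univ : Finset (Fin J)).powersetCard K,
      (1 - (K : ℝ) / (J : ℝ)) * (∑ j ∈ S, (c j - (1 / (K : ℝ)) * ∑ j' ∈ S, c j') ^ 2)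
        / (((K : ℝ) - 1) * (K : ℝ))
      = (1 - (K:ℝ)/(J:ℝ))/(((K:ℝ)-1)*(K:ℝ)) * ((((J-1).choose (K-1) : ℕ):ℝ) * ∑ j, (c j)^2)
        - (1 - (K:ℝ)/(J:ℝ))/(((K:ℝ)-1)*(K:ℝ)*(K:ℝ))
          * ((((J-2).choose (K-2) : ℕ):ℝ) * (∑ j, c j)^2
            + ((((J-1).choose (K-1) : ℕ):ℝ) - (((J-2).choose (K-2) : ℕ):ℝ)) * ∑ j, (c j)^2) := by
    have hS : ∀ S ∈ (univ : Finset (Fin J)).powersetCard K,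
        (1 - (K : ℝ) / (J : ℝ)) * (∑ j ∈ S, (c j - (1 / (K : ℝ)) * ∑ j' ∈ S, c j') ^ 2)
          / (((K : ℝ) - 1) * (K : ℝ))
        = (1 - (K:ℝ)/(J:ℝ))/(((K:ℝ)-1)*(K:ℝ)) * (∑ j ∈ S, (c j)^2)
          - (1 - (K:ℝ)/(J:ℝ))/(((K:ℝ)-1)*(K:ℝ)*(K:ℝ)) * (∑ j ∈ S, c j)^2 := by
      intro S hSP
      have hc : (S.card : ℝ) = (K:ℝ) := by
        exact_mod_cast congrArg (fun m : ℕ => (m:ℝ)) (mem_powersetCard.mp hSP).2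
      have hexp : ∑ j ∈ S, (c j - (1 / (K : ℝ)) * ∑ j' ∈ S, c j') ^ 2
          = ∑ j ∈ S, (c j)^2
            - (2*((1/(K:ℝ)) * ∑ j' ∈ S, c j')) * (∑ j ∈ S, c j)
            + (S.card : ℝ) * ((1/(K:ℝ)) * ∑ j' ∈ S, c j')^2 := by
        rw [Finset.sum_congr rfl (fun j _ => by ring :
          ∀ j ∈ S, (c j - (1 / (K : ℝ)) * ∑ j' ∈ S, c j') ^ 2
            = ((c j)^2 - (2*((1/(K:ℝ)) * ∑ j' ∈ S, c j')) * (c j))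
              + ((1/(K:ℝ)) * ∑ j' ∈ S, c j')^2),
          Finset.sum_add_distrib, Finset.sum_sub_distrib, ← Finset.mul_sum,
          Finset.sum_const, nsmul_eq_mul]
      rw [hexp, hc]
      field_simp
      ring
    rw [Finset.sum_congr rfl hS, Finset.sum_sub_distrib, ← Finset.mul_sum, ← Finset.mul_sum,
      sum_single J K (by omega) (fun j => (c j)^2), sum_sq J K (by omega) c]
  rw [hLnum]
  have hRnum : ∑ S ∈ (univ : Finset (Fin J)).powersetCard K,
      ((1 / (K : ℝ)) * ∑ j ∈ S, c j
        - (1/(K:ℝ)) * ((((J-1).choose (K-1) : ℕ) : ℝ) * ∑ j, c j)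
            / ((((univ : Finset (Fin J)).powersetCard K).card : ℕ) : ℝ)) ^ 2
      = (1/(K:ℝ))^2 * ((((J-2).choose (K-2) : ℕ):ℝ) * (∑ j, c j)^2
            + ((((J-1).choose (K-1) : ℕ):ℝ) - (((J-2).choose (K-2) : ℕ):ℝ)) * ∑ j, (c j)^2)
        - (2*((1/(K:ℝ)) * ((((J-1).choose (K-1) : ℕ) : ℝ) * ∑ j, c j)
            / ((((univ : Finset (Fin J)).powersetCard K).card : ℕ) : ℝ))*(1/(K:ℝ)))
            * ((((J-1).choose (K-1) : ℕ):ℝ) * ∑ j, c j)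
        + ((((univ : Finset (Fin J)).powersetCard K).card : ℕ) : ℝ)
            * ((1/(K:ℝ)) * ((((J-1).choose (K-1) : ℕ) : ℝ) * ∑ j, c j)
            / ((((univ : Finset (Fin J)).powersetCard K).card : ℕ) : ℝ))^2 := by
    set μ := (1/(K:ℝ)) * ((((J-1).choose (K-1) : ℕ) : ℝ) * ∑ j, c j)
        / ((((univ : Finset (Fin J)).powersetCard K).card : ℕ) : ℝ) with hμdef
    have hS : ∀ S ∈ (univ : Finset (Fin J)).powersetCard K,
        ((1 / (K : ℝ)) * ∑ j ∈ S, c j - μ) ^ 2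
        = ((1/(K:ℝ))^2 * (∑ j ∈ S, c j)^2 - (2*μ*(1/(K:ℝ))) * (∑ j ∈ S, c j)) + μ^2 :=
      fun S _ => by ring
    rw [Finset.sum_congr rfl hS, Finset.sum_add_distrib, Finset.sum_sub_distrib,
      ← Finset.mul_sum, ← Finset.mul_sum, Finset.sum_const, nsmul_eq_mul,
      sum_sq J K (by omega) c]
    have : ∑ S ∈ (univ : Finset (Fin J)).powersetCard K, ∑ j ∈ S, c j
        = (((J-1).choose (K-1) : ℕ):ℝ) * ∑ j, c j := sum_single J K (by omega) c
    rw [this]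
  rw [hRnum]
  exact key_algebra (J:ℝ) (K:ℝ) _ _ _ _ _ hK0 hK1r hJ0 hJ1r hn hR1 hR2
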